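/- Let A ∈ ℝ^{n×n} be Hurwitz, i.e., every eigenvalue of A (viewed as a complex matrix) has strictly negative real part, let Q ∈ ℝ^{n×n} be skew-symmetric (Q^T = −Q), and suppose L ∈ ℝ^{n×n} satisfies the Lyapunov equation A^T L + L A + Q = 0. Then L is skew-symmetric, i.e., L^T = −L. -/

import Mathlib

open Matrix Polynomial

lemma aux_charpoly_transpose {n : ℕ} (B : Matrix (Fin n) (Fin n) ℂ) :
    Bᵀ.charpoly = B.charpoly := by
  rw [Matrix.charpoly, Matrix.charpoly, ← Matrix.det_transpose (Matrix.charmatrix B)]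
  congr 1
  refine Matrix.ext fun i j => ?_
  rcases eq_or_ne i j with rfl | h
  · simp
  · rw [Matrix.transpose_apply, Matrix.charmatrix_apply_ne _ _ _ h,
      Matrix.charmatrix_apply_ne _ _ _ (Ne.symm h), Matrix.transpose_apply]

lemma aux_root_mem_spectrum {n : ℕ} (B : Matrix (Fin n) (Fin n) ℂ) (μ : ℂ)
    (h : B.charpoly.eval μ = 0) : μ ∈ spectrum ℂ B := by
  rw [spectrum.mem_iff]
  intro hu
  rw [Matrix.charpoly, _root_.eval_det, Matrix.matPolyEquiv_charmatrix] at h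
  simp only [eval_sub, eval_X, eval_C] at h
  have hdet : (Matrix.scalar (Fin n) μ - B).det = 0 := h
  have halg : algebraMap ℂ (Matrix (Fin n) (Fin n) ℂ) μ = Matrix.scalar (Fin n) μ := by
    rw [Matrix.algebraMap_eq_diagonal, Matrix.scalar_apply]
    rfl
  rw [halg, Matrix.isUnit_iff_isUnit_det, hdet] at hu
  simp at hu

lemma aux_aeval_comm {n : ℕ} (B N : Matrix (Fin n) (Fin n) ℂ)
    (h : Bᵀ * N = N * (-B)) (p : ℂ[X]) :
    (Polynomial.aeval Bᵀ p) * N = N * Polynomial.aeval (-B) p := by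
  have hpow : ∀ k : ℕ, Bᵀ ^ k * N = N * (-B) ^ k := by
    intro k
    induction k with
    | zero => simp
    | succ k ih =>
        rw [pow_succ', mul_assoc, ih, ← mul_assoc, h, mul_assoc, ← pow_succ']
  induction p using Polynomial.induction_on' with
  | add p q hp hq => simp only [map_add, add_mul, mul_add, hp, hq]
  | monomial k a =>
      rw [Polynomial.aeval_monomial, Polynomial.aeval_monomial, mul_assoc, hpow,
        ← mul_assoc, Algebra.commutes a N, mul_assoc]

theorem stmt_9 (n : ℕ)
    (A : Matrix (Fin n) (Fin n) ℝ)
    (hHurwitz : ∀ lam ∈ spectrum ℂ (A.map Complex.ofReal), lam.re < 0)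
    (Q : Matrix (Fin n) (Fin n) ℝ) (hQ : Qᵀ = -Q)
    (L : Matrix (Fin n) (Fin n) ℝ)
    (hL : Aᵀ * L + L * A + Q = 0) :
    Lᵀ = -L := by
  have hM : Aᵀ * (L + Lᵀ) + (L + Lᵀ) * A = 0 := by
    have key : Aᵀ * (L + Lᵀ) + (L + Lᵀ) * A =
        (Aᵀ * L + L * A + Q) + (Aᵀ * L + L * A + Q)ᵀ := by
      simp only [Matrix.transpose_add, Matrix.transpose_mul, Matrix.transpose_transpose, hQ,
        Matrix.mul_add, Matrix.add_mul]
      abel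
    rw [hL] at key
    simpa using key
  -- complexify
  set φ : Matrix (Fin n) (Fin n) ℝ →+* Matrix (Fin n) (Fin n) ℂ :=
    Complex.ofRealHom.mapMatrix with hφ
  set B : Matrix (Fin n) (Fin n) ℂ := A.map Complex.ofReal with hB
  set N : Matrix (Fin n) (Fin n) ℂ := (L + Lᵀ).map Complex.ofReal with hN
  have hcoe : ⇑Complex.ofRealHom = Complex.ofReal := rfl
  have hφA : φ A = B := by simp [hφ, hB, RingHom.mapMatrix_apply, hcoe]
  have hφAt : φ Aᵀ = Bᵀ := by
    simp [hφ, hB, RingHom.mapMatrix_apply, Matrix.transpose_map, hcoe]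
  have hφM : φ (L + Lᵀ) = N := by simp [hφ, hN, RingHom.mapMatrix_apply, hcoe]
  have hC : Bᵀ * N + N * B = 0 := by
    have h := congrArg φ hM
    rw [_root_.map_add, _root_.map_mul, _root_.map_mul, map_zero, hφA, hφAt, hφM] at h
    exact h
  have hC' : Bᵀ * N = N * (-B) := by
    rw [mul_neg]
    exact eq_neg_of_add_eq_zero_left hC
  have hcomm := aux_aeval_comm B N hC' Bᵀ.charpoly
  rw [Matrix.aeval_self_charpoly, zero_mul] at hcomm
  -- show the right factor is a unit
  rcases Nat.eq_zero_or_pos n with hn | hn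
  · subst hn
    ext i j
    exact absurd i.2 (by omega)
  have hXunit : IsUnit (Polynomial.aeval (-B) Bᵀ.charpoly) := by
    by_contra hX
    have h0 : (0 : ℂ) ∈ spectrum ℂ (Polynomial.aeval (-B) Bᵀ.charpoly) :=
      (spectrum.zero_mem_iff ℂ).mpr hX
    have hdeg : 0 < (Bᵀ.charpoly).degree := by
      rw [Matrix.charpoly_degree_eq_dim]
      simpa [Fintype.card_fin] using (Nat.cast_pos (α := ℕ∞)).mpr hn
    rw [spectrum.map_polynomial_aeval_of_degree_pos (-B) _ hdeg] at h0
    obtain ⟨μ, hμ, hμ0⟩ := h0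
    have h1 : -μ ∈ spectrum ℂ B := by
      rw [← spectrum.neg_eq] at hμ
      exact Set.mem_neg.mp hμ
    have h2 : μ.re > 0 := by
      have := hHurwitz (-μ) h1
      simp only [Complex.neg_re] at this
      linarith
    have h3 : μ ∈ spectrum ℂ B :=
      aux_root_mem_spectrum B μ (by rwa [aux_charpoly_transpose] at hμ0)
    have := hHurwitz μ h3
    linarith
  obtain ⟨u, hu⟩ := hXunit
  have hN0 : N = 0 := by
    calc N = N * ↑u * ↑u⁻¹ := by rw [mul_assoc, Units.mul_inv, mul_one]
    _ = 0 := by rw [hu, ← hcomm, zero_mul]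
  have hM0 : L + Lᵀ = 0 := by
    have : ∀ i j, ((L + Lᵀ) i j : ℂ) = ((0 : Matrix (Fin n) (Fin n) ℝ) i j : ℂ) := by
      intro i j
      have := congrFun (congrFun hN0 i) j
      simpa [hN, Matrix.map_apply] using this
    ext i j
    exact_mod_cast this i j
  ext i j
  have := congrFun (congrFun hM0 i) j
  simp only [Matrix.add_apply, Matrix.zero_apply] at this
  simp only [Matrix.neg_apply]
  linarith
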